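/- Let M=(S,A,P) be an RMDP and T ⊆ S. If m > 0 and there exists a pure memoryless agent policy σ such that Val^{s,σ}_M(Reach(T)) ≥ m for every state s ∈ S, then Val^{s,σ}_M(Reach(T)) = 1 for every state s ∈ S. -/

import Mathlib

open scoped BigOperators Classical

/-- A robust MDP over finite state set `S` and finite action set `A`.
Distributions are represented as real-valued probability vectors `S → ℝ`. -/
structure RMDP (S A : Type) [Fintype S] [Fintype A] where
  /-- available actions at each state -/
  Act : S → Finset A
  Act_nonempty : ∀ s, (Act s).Nonempty
  /-- the uncertainty sets -/
  P : S → A → Set (S → ℝ)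
  P_prob : ∀ s, ∀ a ∈ Act s, ∀ p ∈ P s a, (∀ t, 0 ≤ p t) ∧ ∑ t, p t = 1
  P_nonempty : ∀ s, ∀ a ∈ Act s, (P s a).Nonempty
  P_compact : ∀ s, ∀ a ∈ Act s, IsCompact (P s a)

variable {S A : Type} [Fintype S] [Nonempty S] [Fintype A]

/-- An agent policy: given a history and the current state, a probability
distribution over the available actions. -/
structure AgentPolicy (M : RMDP S A) where
  toFun : List (S × A) → S → A → ℝ
  nonneg : ∀ h s a, 0 ≤ toFun h s a
  sum_one : ∀ h s, ∑ a, toFun h s a = 1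
  mem_act : ∀ h s a, toFun h s a ≠ 0 → a ∈ M.Act s

/-- An environment policy: given a history, the current state and the chosen
action, a distribution from the uncertainty set. -/
structure EnvPolicy (M : RMDP S A) where
  toFun : List (S × A) → S → A → S → ℝ
  mem : ∀ h s, ∀ a ∈ M.Act s, toFun h s a ∈ M.P s a

/-- A pure memoryless agent policy deterministically picks an action
depending only on the current state. -/
def AgentPolicy.PureMemoryless {M : RMDP S A} (σ : AgentPolicy M) : Prop :=
  ∃ f : S → A, ∀ h s a, σ.toFun h s a = if a = f s then 1 else 0

/-- A pure memoryless environment policy picks the transition distribution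
depending only on the current state and action. -/
def EnvPolicy.PureMemoryless {M : RMDP S A} (ρ : EnvPolicy M) : Prop :=
  ∃ g : S → A → S → ℝ, ∀ h s a, ρ.toFun h s a = g s a

/-- Probability, under policies `σ, ρ`, of reaching the target `T` within `k`
steps, starting from state `s` with history `h`. -/
noncomputable def reachK (M : RMDP S A) (σ : AgentPolicy M) (ρ : EnvPolicy M) (T : Set S) :
    ℕ → List (S × A) → S → ℝ
  | 0, _, s => if s ∈ T then 1 else 0
  | k + 1, h, s =>
      if s ∈ T then 1
      else ∑ a, σ.toFun h s a * ∑ t, ρ.toFun h s a t * reachK M σ ρ T k (h ++ [(s, a)]) t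

/-- `ℙ^{σ,ρ}_M(s)[Reach(T)]`: the probability of eventually reaching `T`,
which is the supremum over `k` of the probabilities of reaching `T` within `k` steps. -/
noncomputable def reachProb (M : RMDP S A) (σ : AgentPolicy M) (ρ : EnvPolicy M)
    (T : Set S) (s : S) : ℝ :=
  ⨆ k : ℕ, reachK M σ ρ T k [] s

/-- `Val^{s,σ}_M(Reach(T)) = inf_ρ ℙ^{σ,ρ}_M(s)[Reach(T)]`. -/
noncomputable def reachVal (M : RMDP S A) (σ : AgentPolicy M) (T : Set S) (s : S) : ℝ :=
  ⨅ ρ : EnvPolicy M, reachProb M σ ρ T s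

/-- `Val^{s}_M(Reach(T)) = sup_σ inf_ρ ℙ^{σ,ρ}_M(s)[Reach(T)]`. -/
noncomputable def reachValSup (M : RMDP S A) (T : Set S) (s : S) : ℝ :=
  ⨆ σ : AgentPolicy M, reachVal M σ T s

/-- `force_A(s,B)`: the agent has an action that reaches `B` with positive
probability no matter which distribution the environment picks. -/
def forceA (M : RMDP S A) (s : S) (B : Set S) : Prop :=
  ∃ a ∈ M.Act s, ∀ p ∈ M.P s a, 0 < ∑ t, B.indicator p t

/-- `force_E(s,B)`: whatever action the agent picks, the environment can pick a
distribution reaching `B` with positive probability. -/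
def forceE (M : RMDP S A) (s : S) (B : Set S) : Prop :=
  ∀ a ∈ M.Act s, ∃ p ∈ M.P s a, 0 < ∑ t, B.indicator p t

/-- The increasing sequence `T₀ = T`, `T_{i+1} = T_i ∪ {s | force_A(s, T_i)}`. -/
def attrSeqA (M : RMDP S A) (T : Set S) : ℕ → Set S
  | 0 => T
  | i + 1 => attrSeqA M T i ∪ {s | forceA M s (attrSeqA M T i)}

/-- The positive attractor of the agent. -/
def PAttrA (M : RMDP S A) (T : Set S) : Set S := ⋃ i, attrSeqA M T i

/-- The increasing sequence `T₀ = T`, `T_{i+1} = T_i ∪ {s | force_E(s, T_i)}`. -/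
def attrSeqE (M : RMDP S A) (T : Set S) : ℕ → Set S
  | 0 => T
  | i + 1 => attrSeqE M T i ∪ {s | forceE M s (attrSeqE M T i)}

/-- The positive attractor of the environment. -/
def PAttrE (M : RMDP S A) (T : Set S) : Set S := ⋃ i, attrSeqE M T i


set_option linter.unusedSectionVars false
set_option linter.unusedVariables false
set_option maxHeartbeats 1000000

section Aux

variable {S A : Type} [Fintype S] [Nonempty S] [Fintype A]

/-- one-step recursion driven by a deterministic action map `f` and a raw
environment choice `g` (one distribution per (history, state)). -/
noncomputable def rK (f : S → A) (T : Set S) (g : List (S × A) × S → S → ℝ) :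
    ℕ → List (S × A) → S → ℝ
  | 0, _, s => if s ∈ T then 1 else 0
  | k + 1, h, s =>
      if s ∈ T then 1
      else ∑ t, g (h, s) t * rK f T g k (h ++ [(s, f s)]) t

def IsProbFam (g : List (S × A) × S → S → ℝ) : Prop :=
  ∀ p : List (S × A) × S, (∀ t, 0 ≤ g p t) ∧ ∑ t, g p t = 1

variable {f : S → A} {T : Set S} {g : List (S × A) × S → S → ℝ}

lemma rK_nonneg (Hg : IsProbFam g) : ∀ k h s, 0 ≤ rK f T g k h s := by
  intro k
  induction k with
  | zero => intro h s; simp only [rK]; split <;> norm_num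
  | succ k ih =>
    intro h s; simp only [rK]; split
    · norm_num
    · exact Finset.sum_nonneg fun t _ => mul_nonneg ((Hg (h, s)).1 t) (ih _ _)

lemma rK_le_one (Hg : IsProbFam g) : ∀ k h s, rK f T g k h s ≤ 1 := by
  intro k
  induction k with
  | zero => intro h s; simp only [rK]; split <;> norm_num
  | succ k ih =>
    intro h s; simp only [rK]; split
    · norm_num
    · calc ∑ t, g (h, s) t * rK f T g k (h ++ [(s, f s)]) t
          ≤ ∑ t, g (h, s) t * 1 :=
            Finset.sum_le_sum fun t _ => mul_le_mul_of_nonneg_left (ih _ _) ((Hg (h, s)).1 t)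
        _ = 1 := by simp [(Hg (h, s)).2]

lemma rK_of_mem {s : S} (hs : s ∈ T) : ∀ k h, rK f T g k h s = 1 := by
  intro k h; cases k <;> simp [rK, hs]

lemma rK_succ_le (Hg : IsProbFam g) : ∀ k h s, rK f T g k h s ≤ rK f T g (k + 1) h s := by
  intro k
  induction k with
  | zero =>
    intro h s
    by_cases hs : s ∈ T
    · simp [rK_of_mem hs, rK, hs]
    · have h0 : rK f T g 0 h s = 0 := by simp [rK, hs]
      rw [h0]; exact rK_nonneg Hg 1 h s
  | succ k ih =>
    intro h s
    simp only [rK]; split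
    · norm_num
    · exact Finset.sum_le_sum fun t _ => mul_le_mul_of_nonneg_left (ih _ _) ((Hg (h, s)).1 t)

lemma rK_mono (Hg : IsProbFam g) {k k' : ℕ} (hk : k ≤ k') (h : List (S × A)) (s : S) :
    rK f T g k h s ≤ rK f T g k' h s := by
  induction k' with
  | zero => simp_all
  | succ k' ih =>
    rcases Nat.lt_or_ge k (k' + 1) with hlt | hge
    · exact (ih (Nat.lt_succ_iff.mp hlt)).trans (rK_succ_le Hg k' h s)
    · have : k = k' + 1 := le_antisymm hk hge
      subst this; rfl

lemma rK_compl (Hg : IsProbFam g) {c : ℝ} (hc : 0 ≤ c) {k : ℕ}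
    (hk : ∀ h s, 1 - rK f T g k h s ≤ c) :
    ∀ n h s, 1 - rK f T g (n + k) h s ≤ (1 - rK f T g n h s) * c := by
  intro n
  induction n with
  | zero =>
    intro h s
    by_cases hs : s ∈ T
    · simp [rK_of_mem hs]
    · have h0 : rK f T g 0 h s = 0 := by simp [rK, hs]
      simpa [h0] using hk h s
  | succ n ih =>
    intro h s
    by_cases hs : s ∈ T
    · simp [rK_of_mem hs]
    · have e1 : n + 1 + k = (n + k) + 1 := by omega
      rw [e1]
      have hpos := (Hg (h, s)).1
      have hsum := (Hg (h, s)).2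
      set h' := h ++ [(s, f s)] with hh'
      have unf : ∀ j, rK f T g (j + 1) h s = ∑ t, g (h, s) t * rK f T g j h' t := by
        intro j; simp only [rK, hs, if_false]; rfl
      rw [unf (n + k), unf n]
      have key : ∀ j, 1 - ∑ t, g (h, s) t * rK f T g j h' t
          = ∑ t, g (h, s) t * (1 - rK f T g j h' t) := by
        intro j
        rw [Finset.sum_congr rfl (fun t _ => mul_sub (g (h, s) t) 1 (rK f T g j h' t)),
          Finset.sum_sub_distrib]
        simp [hsum]
      rw [key (n + k), key n]
      calc ∑ t, g (h, s) t * (1 - rK f T g (n + k) h' t)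
          ≤ ∑ t, g (h, s) t * ((1 - rK f T g n h' t) * c) :=
            Finset.sum_le_sum fun t _ => mul_le_mul_of_nonneg_left (ih h' t) (hpos t)
        _ = (∑ t, g (h, s) t * (1 - rK f T g n h' t)) * c := by
            rw [Finset.sum_mul]; exact Finset.sum_congr rfl fun t _ => by ring

lemma rK_shift : ∀ (k : ℕ) (h₀ h : List (S × A)) (s : S),
    rK f T g k (h₀ ++ h) s = rK f T (fun p => g (h₀ ++ p.1, p.2)) k h s := by
  intro k
  induction k with
  | zero => intro h₀ h s; simp [rK]
  | succ k ih =>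
    intro h₀ h s
    simp only [rK]
    split
    · rfl
    · refine Finset.sum_congr rfl fun t _ => ?_
      rw [List.append_assoc, ih h₀ (h ++ [(s, f s)]) t]

lemma rK_continuous : ∀ (k : ℕ) (h : List (S × A)) (s : S),
    Continuous (fun g : List (S × A) × S → S → ℝ => rK f T g k h s) := by
  intro k
  induction k with
  | zero => intro h s; simp only [rK]; exact continuous_const
  | succ k ih =>
    intro h s
    simp only [rK]
    split
    · exact continuous_const
    · exact continuous_finset_sum _ fun t _ =>
        Continuous.mul (f := fun g : List (S × A) × S → S → ℝ => g (h, s) t)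
          ((continuous_apply t).comp (continuous_apply (h, s))) (ih _ _)

end Aux

section Aux2

variable {S A : Type} [Fintype S] [Nonempty S] [Fintype A]

def Cset (M : RMDP S A) (f : S → A) : Set (List (S × A) × S → S → ℝ) :=
  Set.pi Set.univ fun p => M.P p.2 (f p.2)

lemma isProbFam_of_mem_Cset {M : RMDP S A} {f : S → A} (hf : ∀ s, f s ∈ M.Act s)
    {g : List (S × A) × S → S → ℝ} (hg : g ∈ Cset M f) : IsProbFam g :=
  fun p => M.P_prob p.2 (f p.2) (hf p.2) _ (hg p (Set.mem_univ p))

/-- Build an environment policy from a raw choice `g ∈ Cset M f`. -/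
noncomputable def envOf (M : RMDP S A) (f : S → A) (hf : ∀ s, f s ∈ M.Act s)
    (g : List (S × A) × S → S → ℝ) (hg : g ∈ Cset M f) : EnvPolicy M where
  toFun h s a :=
    if a = f s then g (h, s)
    else if ha : a ∈ M.Act s then (M.P_nonempty s a ha).some else fun _ => 0
  mem h s a ha := by
    by_cases he : a = f s
    · subst he
      simpa using hg (h, s) (Set.mem_univ _)
    · simp only [he, if_false, ha, dif_pos]
      exact (M.P_nonempty s a ha).some_mem

lemma envOf_coord (M : RMDP S A) (f : S → A) (hf : ∀ s, f s ∈ M.Act s)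
    (g : List (S × A) × S → S → ℝ) (hg : g ∈ Cset M f) :
    (fun p : List (S × A) × S => (envOf M f hf g hg).toFun p.1 p.2 (f p.2)) = g := by
  funext p
  simp [envOf]

lemma reachK_eq_rK {M : RMDP S A} (σ : AgentPolicy M) (f : S → A)
    (hσf : ∀ h s a, σ.toFun h s a = if a = f s then 1 else 0) (ρ : EnvPolicy M) (T : Set S) :
    ∀ k h s, reachK M σ ρ T k h s
      = rK f T (fun p => ρ.toFun p.1 p.2 (f p.2)) k h s := by
  intro k
  induction k with
  | zero => intro h s; simp [reachK, rK]
  | succ k ih =>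
    intro h s
    simp only [reachK, rK]
    split
    · rfl
    · have e1 : ∀ a : A, σ.toFun h s a *
          (∑ t, ρ.toFun h s a t * reachK M σ ρ T k (h ++ [(s, a)]) t)
          = if a = f s then
              (∑ t, ρ.toFun h s (f s) t * reachK M σ ρ T k (h ++ [(s, f s)]) t) else 0 := by
        intro a
        rw [hσf]
        by_cases he : a = f s
        · subst he; simp
        · simp [he]
      rw [Finset.sum_congr rfl fun a _ => e1 a, Finset.sum_ite_eq' Finset.univ (f s)]
      simp only [Finset.mem_univ, if_true]
      exact Finset.sum_congr rfl fun t _ => by rw [ih]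

end Aux2

theorem stmt4 (M : RMDP S A) (T : Set S) (m : ℝ) (hm : 0 < m)
    (σ : AgentPolicy M) (hσ : σ.PureMemoryless)
    (h : ∀ s : S, m ≤ reachVal M σ T s) :
    ∀ s : S, reachVal M σ T s = 1 := by
  obtain ⟨f, hσf⟩ := hσ
  have hf : ∀ s, f s ∈ M.Act s := fun s => σ.mem_act [] s (f s) (by rw [hσf]; simp)
  have hprob : ∀ {g : List (S × A) × S → S → ℝ}, g ∈ Cset M f → IsProbFam g :=
    fun hg => isProbFam_of_mem_Cset hf hg
  have hmemρ : ∀ ρ : EnvPolicy M, (fun p : List (S × A) × S => ρ.toFun p.1 p.2 (f p.2)) ∈ Cset M f :=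
    fun ρ p _ => ρ.mem p.1 p.2 (f p.2) (hf p.2)
  -- basic bounds on reachProb
  have hRPeq : ∀ (ρ : EnvPolicy M) (s : S), reachProb M σ ρ T s
      = ⨆ k, rK f T (fun p => ρ.toFun p.1 p.2 (f p.2)) k [] s := by
    intro ρ s
    exact iSup_congr fun k => reachK_eq_rK σ f hσf ρ T k [] s
  have hbddA : ∀ (g : List (S × A) × S → S → ℝ), g ∈ Cset M f →
      ∀ s : S, BddAbove (Set.range fun k => rK f T g k [] s) := by
    intro g hg s
    exact ⟨1, by rintro x ⟨k, rfl⟩; exact rK_le_one (hprob hg) k [] s⟩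
  have hRP_le_one : ∀ (ρ : EnvPolicy M) (s : S), reachProb M σ ρ T s ≤ 1 := by
    intro ρ s
    rw [hRPeq]
    exact ciSup_le fun k => rK_le_one (hprob (hmemρ ρ)) k [] s
  have hRP_nonneg : ∀ (ρ : EnvPolicy M) (s : S), 0 ≤ reachProb M σ ρ T s := by
    intro ρ s
    rw [hRPeq]
    exact le_trans (rK_nonneg (hprob (hmemρ ρ)) 0 [] s)
      (le_ciSup (hbddA _ (hmemρ ρ) s) 0)
  have hval_le : ∀ (ρ : EnvPolicy M) (s : S), reachVal M σ T s ≤ reachProb M σ ρ T s := by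
    intro ρ s
    exact ciInf_le ⟨0, by rintro x ⟨ρ', rfl⟩; exact hRP_nonneg ρ' s⟩ ρ
  -- a default environment policy
  have hg₀ : (fun p : List (S × A) × S => (M.P_nonempty p.2 (f p.2) (hf p.2)).some) ∈ Cset M f :=
    fun p _ => (M.P_nonempty p.2 (f p.2) (hf p.2)).some_mem
  set ρ₀ : EnvPolicy M := envOf M f hf _ hg₀ with hρ₀
  have hm1 : m ≤ 1 := by
    have s₀ := Classical.arbitrary S
    exact (h s₀).trans ((hval_le ρ₀ s₀).trans (hRP_le_one ρ₀ s₀))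
  -- every g ∈ Cset gives sup ≥ m
  have hsup_ge : ∀ g, g ∈ Cset M f → ∀ s : S, m ≤ ⨆ k, rK f T g k [] s := by
    intro g hg s
    have e : reachProb M σ (envOf M f hf g hg) T s = ⨆ k, rK f T g k [] s := by
      rw [hRPeq, envOf_coord]
    exact (h s).trans ((hval_le (envOf M f hf g hg) s).trans_eq e)
  -- compactness: uniform N for each state
  have hGc : IsCompact (Cset M f) := isCompact_univ_pi fun p => M.P_compact _ _ (hf _)
  have hGcl : IsClosed (Cset M f) :=
    isClosed_set_pi fun p _ => (M.P_compact _ _ (hf _)).isClosed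
  have hexN : ∀ s : S, ∃ n, ∀ g ∈ Cset M f, m / 2 < rK f T g n [] s := by
    intro s
    by_contra hc
    push_neg at hc
    set K : ℕ → Set (List (S × A) × S → S → ℝ) :=
      fun n => Cset M f ∩ {g | rK f T g n [] s ≤ m / 2} with hK
    have hKcl : ∀ n, IsClosed (K n) :=
      fun n => hGcl.inter (isClosed_le (rK_continuous n [] s) continuous_const)
    have hKne : ∀ n, (K n).Nonempty := by
      intro n
      obtain ⟨g, hg, hle⟩ := hc n
      exact ⟨g, hg, hle⟩
    have hKsub : ∀ n, K (n + 1) ⊆ K n := by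
      rintro n g ⟨hg, hle⟩
      exact ⟨hg, (rK_succ_le (hprob hg) n [] s).trans hle⟩
    obtain ⟨g, hgall⟩ := IsCompact.nonempty_iInter_of_sequence_nonempty_isCompact_isClosed
      K hKsub hKne (hGc.inter_right (isClosed_le (rK_continuous 0 [] s) continuous_const)) hKcl
    have hg : g ∈ Cset M f := (Set.mem_iInter.mp hgall 0).1
    have hle : ∀ n, rK f T g n [] s ≤ m / 2 := fun n => (Set.mem_iInter.mp hgall n).2
    have : m ≤ m / 2 := (hsup_ge g hg s).trans (ciSup_le hle)
    linarith
  choose N hN using hexN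
  set N₀ : ℕ := Finset.univ.sup N with hN₀
  have hNbig : ∀ g ∈ Cset M f, ∀ (hh : List (S × A)) (s : S),
      1 - rK f T g N₀ hh s ≤ 1 - m / 2 := by
    intro g hg hh s
    have hshiftmem : (fun p : List (S × A) × S => g (hh ++ p.1, p.2)) ∈ Cset M f :=
      fun p _ => hg (hh ++ p.1, p.2) (Set.mem_univ _)
    have h1 : m / 2 < rK f T (fun p => g (hh ++ p.1, p.2)) (N s) [] s := hN s _ hshiftmem
    have h2 : rK f T g (N s) hh s = rK f T (fun p => g (hh ++ p.1, p.2)) (N s) [] s := by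
      have := rK_shift (g := g) (f := f) (T := T) (N s) hh [] s
      simpa using this
    have h3 : rK f T g (N s) hh s ≤ rK f T g N₀ hh s :=
      rK_mono (hprob hg) (Finset.le_sup (Finset.mem_univ s)) hh s
    rw [h2] at h3
    linarith
  -- geometric decay
  have hq0 : (0 : ℝ) ≤ 1 - m / 2 := by linarith
  have hgeo : ∀ g ∈ Cset M f, ∀ (j : ℕ) (hh : List (S × A)) (s : S),
      1 - rK f T g (j * N₀) hh s ≤ (1 - m / 2) ^ j := by
    intro g hg j
    induction j with
    | zero =>
      intro hh s
      have hnn := rK_nonneg (f := f) (T := T) (hprob hg) 0 hh s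
      simpa using by linarith
    | succ j ih =>
      intro hh s
      have e : (j + 1) * N₀ = N₀ + j * N₀ := by ring
      rw [e]
      have hc := rK_compl (hprob hg) (c := (1 - m / 2) ^ j) (pow_nonneg hq0 j)
        (k := j * N₀) (fun hh' s' => ih hh' s') N₀ hh s
      have h2 : (1 - rK f T g N₀ hh s) * (1 - m / 2) ^ j
          ≤ (1 - m / 2) * (1 - m / 2) ^ j :=
        mul_le_mul_of_nonneg_right (hNbig g hg hh s) (pow_nonneg hq0 j)
      calc 1 - rK f T g (N₀ + j * N₀) hh s
          ≤ (1 - rK f T g N₀ hh s) * (1 - m / 2) ^ j := hc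
        _ ≤ (1 - m / 2) * (1 - m / 2) ^ j := h2
        _ = (1 - m / 2) ^ (j + 1) := (pow_succ' _ _).symm
  -- conclusion
  intro s
  refine le_antisymm ((hval_le ρ₀ s).trans (hRP_le_one ρ₀ s)) ?_
  haveI : Nonempty (EnvPolicy M) := ⟨ρ₀⟩
  refine le_ciInf fun ρ => ?_
  rw [hRPeq]
  set g : List (S × A) × S → S → ℝ := fun p => ρ.toFun p.1 p.2 (f p.2) with hgdef
  have hg : g ∈ Cset M f := hmemρ ρ
  have hj : ∀ j : ℕ, 1 - (1 - m / 2) ^ j ≤ ⨆ k, rK f T g k [] s := by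
    intro j
    have h1 := hgeo g hg j [] s
    have h2 : rK f T g (j * N₀) [] s ≤ ⨆ k, rK f T g k [] s :=
      le_ciSup (hbddA g hg s) (j * N₀)
    linarith
  have hlim : Filter.Tendsto (fun j : ℕ => 1 - (1 - m / 2 : ℝ) ^ j) Filter.atTop (nhds 1) := by
    have hpow : Filter.Tendsto (fun j : ℕ => (1 - m / 2 : ℝ) ^ j) Filter.atTop (nhds 0) := by
      apply tendsto_pow_atTop_nhds_zero_of_lt_one hq0
      linarith
    simpa using Filter.Tendsto.const_sub 1 hpow
  exact le_of_tendsto' hlim hj
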